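/- There exists F ∈ COMFORT(Δ_2) with F ≠ id such that F maps Layer_{2,μ} onto Layer_{2,μ} for every μ ∈ [0, 1/3]; consequently, for every increasing homeomorphism f of [0, 1/3] onto itself there exist x ∈ Δ_2 and an index i with x_i ≤ 1/3 and (F(x))_i ≠ f(x_i). In particular, no group embedding Λ_2 of the increasing homeomorphisms of [0, 1/3] into COMFORT(Δ_2) with the property (Λ_2(f)(x))_i = f(x_i) whenever x_i ≤ 1/3 can be surjective onto COMFORT(Δ_2). -/

import Mathlib

open scoped BigOperators

noncomputable section

/-- `Spx k` is the standard simplex on `k` coordinates, i.e. the standard simplex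
`Δ_{k-1}` of the paper, as a subspace of `ℝ^k`. -/
abbrev Spx (k : ℕ) : Type := {x : Fin k → ℝ // x ∈ stdSimplex ℝ (Fin k)}

lemma perm_mem {k : ℕ} (ϑ : Equiv.Perm (Fin k)) {x : Fin k → ℝ}
    (hx : x ∈ stdSimplex ℝ (Fin k)) :
    (fun i => x (ϑ i)) ∈ stdSimplex ℝ (Fin k) :=
  ⟨fun i => hx.1 (ϑ i), (Equiv.sum_comp ϑ x).trans hx.2⟩

/-- membership of `COMFORT (Δ_n)`: a self-homeomorphism of the standard simplex which
(i) respects coordinate permutations and (ii) keeps the order. -/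
structure IsComfort {n : ℕ} (F : Spx (n+1) ≃ₜ Spx (n+1)) : Prop where
  perm : ∀ (ϑ : Equiv.Perm (Fin (n+1))) (x : Spx (n+1)),
      ((F ⟨fun i => x.1 (ϑ i), perm_mem ϑ x.2⟩ : Spx (n+1)) : Fin (n+1) → ℝ)
        = fun i => (F x).1 (ϑ i)
  mono : ∀ (x : Spx (n+1)) (i j : Fin (n+1)), x.1 i ≤ x.1 j → (F x).1 i ≤ (F x).1 j

/-- the `α`-cross `♣_{n,α}` of `Δ_n`. -/
def cross (n : ℕ) (α : ℝ) : Set (Spx (n+1)) := {x | ∃ j, x.1 j = α}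

/-- the boundary `BOU_n = ♣_{n,0}` of `Δ_n`. -/
def bou (n : ℕ) : Set (Spx (n+1)) := cross n 0

/-- the barycenter `Center_n` of `Δ_n`. -/
def center (n : ℕ) : Spx (n+1) :=
  ⟨fun _ => 1/((n:ℝ)+1), by
    constructor
    · intro i
      positivity
    · rw [Finset.sum_const, Finset.card_univ, Fintype.card_fin, nsmul_eq_mul]
      push_cast
      field_simp⟩

/-- the minimal coordinate of a point of `Δ_n`. -/
def minCoord {n : ℕ} (x : Spx (n+1)) : ℝ :=
  Finset.univ.inf' Finset.univ_nonempty x.1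

/-- the `α`-layer `Layer_{n,α}` of `Δ_n`. -/
def layer (n : ℕ) (α : ℝ) : Set (Spx (n+1)) := {x | minCoord x = α}

/-- `Sponge (Δ_n)`: the points of `Δ_n` with pairwise distinct coordinates. -/
def sponge (n : ℕ) : Set (Spx (n+1)) := {x | ∀ i j, x.1 i = x.1 j → i = j}

/-! ### Auxiliary development: a nontrivial layer-preserving comfort homeomorphism -/

/-- the basic one-dimensional layer map: `a` stands for the minimal coordinate,
`v` for a coordinate value. It fixes `a`, fixes the interval `[a, 1-2a]`, and pushes
the middle region up by a quadratic bump. -/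
def hm (a v : ℝ) : ℝ :=
  if 2*v < 1-a then v + (v-a)*(1-a-2*v)/2 else v - (1-2*a-v)*(a+2*v-1)/2

lemma hm_pos {a v : ℝ} (h : 2*v < 1-a) : hm a v = v + (v-a)*(1-a-2*v)/2 := if_pos h
lemma hm_neg {a v : ℝ} (h : ¬ 2*v < 1-a) : hm a v = v - (1-2*a-v)*(a+2*v-1)/2 := if_neg h

lemma hm_cont : Continuous fun p : ℝ × ℝ => hm p.1 p.2 := by
  unfold hm
  apply Continuous.if
  · intro p hp
    have h : 2*p.2 = 1 - p.1 := by
      have := frontier_lt_subset_eq (by fun_prop) (by fun_prop) hp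
      simpa using this
    linear_combination ((1-2*p.1-p.2) - (p.2-p.1))/2 * h
  · fun_prop
  · fun_prop

lemma hm_cont1 (a : ℝ) : Continuous fun v : ℝ => hm a v :=
  hm_cont.comp (continuous_const.prodMk continuous_id)

lemma hm_strictMonoOn {a : ℝ} (ha : 0 ≤ a) (ha3 : a ≤ 1/3) :
    StrictMonoOn (hm a) (Set.Icc a (1-2*a)) := by
  intro v hv w hw hvw
  simp only [Set.mem_Icc] at hv hw
  unfold hm
  split_ifs with h1 h2 h2
  · nlinarith [mul_pos (sub_pos.2 hvw) (show (0:ℝ) < 3+a-2*(v+w) by linarith)]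
  · have k1 : 0 < (1-a-2*v)*(1+a-v) := mul_pos (by linarith) (by linarith)
    have k2 : 0 ≤ (2*w-1+a)*(2*a+w) := mul_nonneg (by linarith) (by linarith)
    nlinarith [k1, k2]
  · linarith
  · nlinarith [mul_pos (sub_pos.2 hvw) (show (0:ℝ) < 5*a-1+2*v+2*w by linarith)]

lemma hm_left {a : ℝ} (ha3 : a ≤ 1/3) : hm a a = a := by
  unfold hm
  split_ifs with h
  · ring
  · have : a = 1/3 := by linarith
    rw [this]; norm_num

lemma hm_right {a : ℝ} (ha3 : a ≤ 1/3) : hm a (1-2*a) = 1-2*a := by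
  unfold hm
  split_ifs with h
  · exfalso; linarith
  · ring

lemma hm_reflect {a v : ℝ} : hm a v + hm a (1-a-v) = 1-a := by
  unfold hm
  split_ifs with h1 h2 h2
  · exfalso; linarith
  · ring
  · ring
  · have hv : v = (1-a)/2 := by linarith
    rw [hv]; ring

/-- the minimum coordinate, written with binary `min`s. -/
def mn (x : Spx 3) : ℝ := min (x.1 0) (min (x.1 1) (x.1 2))

lemma mn_le (x : Spx 3) (i : Fin 3) : mn x ≤ x.1 i := by
  fin_cases i
  · exact min_le_left _ _
  · exact le_trans (min_le_right _ _) (min_le_left _ _)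
  · exact le_trans (min_le_right _ _) (min_le_right _ _)

lemma exists_mn (x : Spx 3) : ∃ i, x.1 i = mn x := by
  rcases le_total (x.1 0) (min (x.1 1) (x.1 2)) with h | h
  · exact ⟨0, (min_eq_left h).symm⟩
  · rcases le_total (x.1 1) (x.1 2) with h2 | h2
    · refine ⟨1, ?_⟩
      show x.1 1 = min _ (min _ _)
      rw [min_eq_left h2] at h ⊢
      rw [min_eq_right h]
    · refine ⟨2, ?_⟩
      show x.1 2 = min _ (min _ _)
      rw [min_eq_right h2] at h ⊢
      rw [min_eq_right h]

lemma le_mn {c : ℝ} (x : Spx 3) (h : ∀ i, c ≤ x.1 i) : c ≤ mn x :=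
  le_min (h 0) (le_min (h 1) (h 2))

lemma mn_nonneg (x : Spx 3) : 0 ≤ mn x := le_mn x fun i => x.2.1 i

lemma sum3 (x : Spx 3) : x.1 0 + x.1 1 + x.1 2 = 1 := by
  have := x.2.2; rwa [Fin.sum_univ_three] at this

lemma mn_le_third (x : Spx 3) : mn x ≤ 1/3 := by
  have := sum3 x
  have h0 := mn_le x 0; have h1 := mn_le x 1; have h2 := mn_le x 2
  linarith

lemma coord_le (x : Spx 3) (i : Fin 3) : x.1 i ≤ 1 - 2*mn x := by
  have hs := sum3 x
  have h0 := mn_le x 0; have h1 := mn_le x 1; have h2 := mn_le x 2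
  fin_cases i
  · show x.1 0 ≤ _; linarith
  · show x.1 1 ≤ _; linarith
  · show x.1 2 ≤ _; linarith

lemma coord_mem (x : Spx 3) (i : Fin 3) : x.1 i ∈ Set.Icc (mn x) (1-2*mn x) :=
  ⟨mn_le x i, coord_le x i⟩

lemma hm_mem {a v : ℝ} (ha : 0 ≤ a) (ha3 : a ≤ 1/3) (hv : v ∈ Set.Icc a (1-2*a)) :
    hm a v ∈ Set.Icc a (1-2*a) := by
  have hmem : a ∈ Set.Icc a (1-2*a) := ⟨le_refl _, by linarith⟩
  have hmem2 : (1-2*a) ∈ Set.Icc a (1-2*a) := ⟨by linarith, le_refl _⟩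
  have h1 : hm a a ≤ hm a v := (hm_strictMonoOn ha ha3).monotoneOn hmem hv hv.1
  have h2 : hm a v ≤ hm a (1-2*a) := (hm_strictMonoOn ha ha3).monotoneOn hv hmem2 hv.2
  rw [hm_left ha3] at h1
  rw [hm_right ha3] at h2
  exact ⟨h1, h2⟩

lemma sum_key {a b c : ℝ} (ha : 0 ≤ a) (hab : a ≤ b) (hbc : b ≤ c) (h : a + b + c = 1) :
    hm a a + hm a b + hm a c = 1 := by
  have hc : c = 1 - a - b := by linarith
  subst hc
  by_cases hb : 2*b < 1-a
  · rw [hm_pos (show 2*a < 1-a by linarith), hm_pos hb,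
      hm_neg (not_lt.2 (show 1-a ≤ 2*(1-a-b) by linarith))]
    ring
  · have hb2 : b = (1-a)/2 := by linarith
    subst hb2
    by_cases ha3 : 2*a < 1-a
    · rw [hm_pos ha3,
        hm_neg (show ¬ 2*((1-a)/2) < 1-a from not_lt.2 (by linarith)),
        hm_neg (show ¬ 2*(1-a-(1-a)/2) < 1-a from not_lt.2 (by linarith))]
      ring
    · have ha' : a = 1/3 := by linarith
      subst ha'
      norm_num [hm]

lemma sum_hm (x : Spx 3) :
    hm (mn x) (x.1 0) + hm (mn x) (x.1 1) + hm (mn x) (x.1 2) = 1 := by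
  have hs := sum3 x
  have n0 := x.2.1 0; have n1 := x.2.1 1; have n2 := x.2.1 2
  rcases le_total (x.1 0) (x.1 1) with h01 | h01 <;>
    rcases le_total (x.1 1) (x.1 2) with h12 | h12 <;>
    rcases le_total (x.1 0) (x.1 2) with h02 | h02
  · have hmn : mn x = x.1 0 := by unfold mn; rw [min_eq_left h12, min_eq_left h01]
    rw [hmn]; have := sum_key n0 h01 h12 (by linarith); linarith
  · have hmn : mn x = x.1 0 := by unfold mn; rw [min_eq_left h12, min_eq_left h01]
    rw [hmn]; have := sum_key n0 h01 h12 (by linarith); linarith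
  · have hmn : mn x = x.1 0 := by unfold mn; rw [min_eq_right h12, min_eq_left h02]
    rw [hmn]; have := sum_key n0 h02 h12 (by linarith); linarith
  · have hmn : mn x = x.1 2 := by unfold mn; rw [min_eq_right h12, min_eq_right h02]
    rw [hmn]; have := sum_key n2 h02 h01 (by linarith); linarith
  · have hmn : mn x = x.1 1 := by unfold mn; rw [min_eq_left h12, min_eq_right h01]
    rw [hmn]; have := sum_key n1 h01 h02 (by linarith); linarith
  · have hmn : mn x = x.1 1 := by unfold mn; rw [min_eq_left h12, min_eq_right h01]
    rw [hmn]; have := sum_key n1 h12 h02 (by linarith); linarith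
  · have hmn : mn x = x.1 0 := by unfold mn; rw [min_eq_right h12, min_eq_left h02]
    rw [hmn]; have := sum_key n0 h02 h12 (by linarith); linarith
  · have hmn : mn x = x.1 2 := by unfold mn; rw [min_eq_right h12, min_eq_right h02]
    rw [hmn]; have := sum_key n2 h12 h01 (by linarith); linarith

lemma Fcoords_mem (x : Spx 3) : (fun i => hm (mn x) (x.1 i)) ∈ stdSimplex ℝ (Fin 3) := by
  constructor
  · intro i
    have h := (hm_mem (mn_nonneg x) (mn_le_third x) (coord_mem x i)).1
    have := mn_nonneg x
    linarith
  · rw [Fin.sum_univ_three]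
    exact sum_hm x

/-- the underlying map of the comfort homeomorphism. -/
def Fmap (x : Spx 3) : Spx 3 := ⟨fun i => hm (mn x) (x.1 i), Fcoords_mem x⟩

lemma Fmap_apply (x : Spx 3) (i : Fin 3) : (Fmap x).1 i = hm (mn x) (x.1 i) := rfl

lemma mn_Fmap (x : Spx 3) : mn (Fmap x) = mn x := by
  apply le_antisymm
  · obtain ⟨i, hi⟩ := exists_mn x
    have h : (Fmap x).1 i = mn x := by
      rw [Fmap_apply, hi, hm_left (mn_le_third x)]
    calc mn (Fmap x) ≤ (Fmap x).1 i := mn_le _ _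
      _ = mn x := h
  · apply le_mn
    intro i
    rw [Fmap_apply]
    exact (hm_mem (mn_nonneg x) (mn_le_third x) (coord_mem x i)).1

lemma Fmap_inj : Function.Injective Fmap := by
  intro x y hxy
  have hmn : mn x = mn y := by rw [← mn_Fmap x, ← mn_Fmap y, hxy]
  apply Subtype.ext; funext i
  have h1 : hm (mn y) (x.1 i) = hm (mn y) (y.1 i) := by
    have := congrArg (fun z : Spx 3 => z.1 i) hxy
    simp only [Fmap_apply] at this
    rw [hmn] at this
    exact this
  have hx' := coord_mem x i
  rw [hmn] at hx'
  exact (hm_strictMonoOn (mn_nonneg y) (mn_le_third y)).injOn hx' (coord_mem y i) h1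

lemma Fmap_surj : Function.Surjective Fmap := by
  intro y
  have ha0 : 0 ≤ mn y := mn_nonneg y
  have ha3 : mn y ≤ 1/3 := mn_le_third y
  set a := mn y with ha
  have hchoice : ∀ i : Fin 3, ∃ v ∈ Set.Icc a (1-2*a), hm a v = y.1 i := by
    intro i
    have hsub := intermediate_value_Icc (show a ≤ 1-2*a by linarith)
      ((hm_cont1 a).continuousOn)
    rw [hm_left ha3, hm_right ha3] at hsub
    obtain ⟨v, hv1, hv2⟩ := hsub (coord_mem y i)
    exact ⟨v, hv1, hv2⟩
  choose v hv1 hv2 using hchoice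
  obtain ⟨j0, hj0⟩ := exists_mn y
  have hvj0 : v j0 = a := by
    apply (hm_strictMonoOn ha0 ha3).injOn (hv1 j0)
      (show a ∈ Set.Icc a (1-2*a) from ⟨le_refl _, by linarith⟩)
    rw [hv2 j0, hj0, hm_left ha3]
  have key : ∀ p q : Fin 3, y.1 j0 + y.1 p + y.1 q = 1 → v p + v q = 1 - a := by
    intro p q hsum
    have h1 : hm a (1 - a - v p) = y.1 q := by
      have hr : hm a (v p) + hm a (1-a-(v p)) = 1-a := hm_reflect
      rw [hv2 p] at hr
      rw [hj0] at hsum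
      linarith
    have hmem : (1 - a - v p) ∈ Set.Icc a (1-2*a) := by
      have h1p := (hv1 p).1; have h2p := (hv1 p).2
      constructor <;> [linarith; linarith]
    have h2 : v q = 1 - a - v p :=
      (hm_strictMonoOn ha0 ha3).injOn (hv1 q) hmem (by rw [hv2 q, h1])
    linarith
  have hsum3 := sum3 y
  have hmem : v ∈ stdSimplex ℝ (Fin 3) := by
    constructor
    · intro i
      have := (hv1 i).1
      linarith
    · rw [Fin.sum_univ_three]
      have hj3 : j0 = 0 ∨ j0 = 1 ∨ j0 = 2 := by omega
      rcases hj3 with h | h | h <;> subst h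
      · have := key 1 2 (by linarith)
        linarith
      · have := key 0 2 (by linarith)
        linarith
      · have := key 0 1 (by linarith)
        linarith
  refine ⟨⟨v, hmem⟩, ?_⟩
  have hmnx : mn ⟨v, hmem⟩ = a := by
    apply le_antisymm
    · calc mn ⟨v, hmem⟩ ≤ v j0 := mn_le ⟨v, hmem⟩ j0
        _ = a := hvj0
    · exact le_mn _ fun i => (hv1 i).1
  apply Subtype.ext; funext i
  show hm (mn ⟨v, hmem⟩) (v i) = y.1 i
  rw [hmnx]
  exact hv2 i

lemma mn_cont : Continuous mn := by
  unfold mn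
  exact ((continuous_apply (0 : Fin 3)).comp continuous_subtype_val).min
    (((continuous_apply (1 : Fin 3)).comp continuous_subtype_val).min
      ((continuous_apply (2 : Fin 3)).comp continuous_subtype_val))

lemma Fmap_cont : Continuous Fmap := by
  apply Continuous.subtype_mk
  apply continuous_pi
  intro i
  exact hm_cont.comp (mn_cont.prodMk ((continuous_apply i).comp continuous_subtype_val))

instance : CompactSpace (Spx 3) := isCompact_iff_compactSpace.mp (isCompact_stdSimplex _ _)

/-- the nontrivial comfort homeomorphism. -/
def FHomeo : Spx 3 ≃ₜ Spx 3 :=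
  Continuous.homeoOfEquivCompactToT2 (f := Equiv.ofBijective Fmap ⟨Fmap_inj, Fmap_surj⟩)
    Fmap_cont

lemma FHomeo_apply (x : Spx 3) : FHomeo x = Fmap x := rfl

lemma FHomeo_coord (x : Spx 3) (i : Fin 3) : (FHomeo x).1 i = hm (mn x) (x.1 i) := rfl

lemma minCoord_eq (x : Spx 3) : minCoord x = mn x := by
  apply le_antisymm
  · obtain ⟨i, hi⟩ := exists_mn x
    rw [← hi]
    exact Finset.inf'_le _ (Finset.mem_univ i)
  · obtain ⟨i, _, hi⟩ := Finset.exists_mem_eq_inf' (Finset.univ_nonempty) x.1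
    show mn x ≤ Finset.univ.inf' _ x.1
    rw [hi]
    exact mn_le x i

/-- first test point. -/
def pt1 : Spx 3 := ⟨![0, 1/4, 3/4], by
  constructor
  · intro i; fin_cases i <;> norm_num
  · rw [Fin.sum_univ_three]; norm_num [Matrix.cons_val_two, Matrix.vecHead, Matrix.vecTail]⟩

lemma pt1_1 : pt1.1 1 = 1/4 := rfl

lemma mn_pt1 : mn pt1 = 0 := by
  show min (0:ℝ) (min (1/4:ℝ) (3/4:ℝ)) = 0
  norm_num

lemma FHomeo_pt1 : (FHomeo pt1).1 1 = 5/16 := by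
  rw [FHomeo_coord, mn_pt1, pt1_1, hm_pos (by norm_num)]
  norm_num

/-- second test point. -/
def pt2 : Spx 3 := ⟨![1/4, 1/4, 1/2], by
  constructor
  · intro i; fin_cases i <;> norm_num
  · rw [Fin.sum_univ_three]; norm_num [Matrix.cons_val_two, Matrix.vecHead, Matrix.vecTail]⟩

lemma pt2_0 : pt2.1 0 = 1/4 := rfl

lemma mn_pt2 : mn pt2 = 1/4 := by
  show min (1/4:ℝ) (min (1/4:ℝ) (1/2:ℝ)) = 1/4
  norm_num

lemma FHomeo_pt2 : (FHomeo pt2).1 0 = 1/4 := by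
  rw [FHomeo_coord, mn_pt2, pt2_0, hm_left (by norm_num)]

/-- a nontrivial element of `COMFORT (Δ_2)` preserving every layer;
consequently it is not of the form `Λ_2 (f)`, so no embedding `Λ_2` as in the paper
can be surjective onto `COMFORT (Δ_2)`. -/
theorem exists_comfort_not_in_lambda_image :
    ∃ F : Spx (2+1) ≃ₜ Spx (2+1),
      IsComfort F ∧
      F ≠ Homeomorph.refl (Spx (2+1)) ∧
      (∀ μ : ℝ, 0 ≤ μ → μ ≤ 1/3 → ⇑F '' layer 2 μ = layer 2 μ) ∧
      (∀ f : Set.Icc (0:ℝ) (1/3) ≃o Set.Icc (0:ℝ) (1/3),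
        ∃ (x : Spx (2+1)) (i : Fin (2+1)) (hx : x.1 i ≤ 1/3),
          (F x).1 i ≠ (f ⟨x.1 i, ⟨x.2.1 i, hx⟩⟩ : ℝ)) ∧
      (∀ Λ : (Set.Icc (0:ℝ) (1/3) ≃o Set.Icc (0:ℝ) (1/3)) → (Spx (2+1) ≃ₜ Spx (2+1)),
        Function.Injective Λ →
        (∀ f (x : Spx (2+1)) (i : Fin (2+1)) (hx : x.1 i ≤ 1/3),
          ((Λ f) x).1 i = (f ⟨x.1 i, ⟨x.2.1 i, hx⟩⟩ : ℝ)) →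
        ¬ (∀ G : Spx (2+1) ≃ₜ Spx (2+1), IsComfort G → ∃ f, Λ f = G))  := by
  have hcomf : IsComfort FHomeo := by
    constructor
    · intro ϑ x
      set xp : Spx 3 := ⟨fun i => x.1 (ϑ i), perm_mem ϑ x.2⟩ with hxp
      have hmnp : mn xp = mn x := by
        apply le_antisymm
        · obtain ⟨i, hi⟩ := exists_mn x
          calc mn xp ≤ xp.1 (ϑ.symm i) := mn_le _ _
            _ = x.1 i := by show x.1 (ϑ (ϑ.symm i)) = x.1 i; rw [Equiv.apply_symm_apply]
            _ = mn x := hi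
        · apply le_mn
          intro i
          exact mn_le x (ϑ i)
      funext i
      show (FHomeo xp).1 i = (FHomeo x).1 (ϑ i)
      rw [FHomeo_coord, FHomeo_coord, hmnp]
    · intro x i j hij
      rw [FHomeo_coord, FHomeo_coord]
      exact (hm_strictMonoOn (mn_nonneg x) (mn_le_third x)).monotoneOn
        (coord_mem x i) (coord_mem x j) hij
  have hb4 : ∀ f : Set.Icc (0:ℝ) (1/3) ≃o Set.Icc (0:ℝ) (1/3),
      ∃ (x : Spx (2+1)) (i : Fin (2+1)) (hx : x.1 i ≤ 1/3),
        (FHomeo x).1 i ≠ (f ⟨x.1 i, ⟨x.2.1 i, hx⟩⟩ : ℝ) := by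
    intro f
    by_cases hf : (f ⟨1/4, by norm_num⟩ : ℝ) = 1/4
    · refine ⟨pt1, 1, by rw [pt1_1]; norm_num, ?_⟩
      have e : (⟨pt1.1 1, ⟨pt1.2.1 1, by rw [pt1_1]; norm_num⟩⟩ : Set.Icc (0:ℝ) (1/3))
          = ⟨1/4, by norm_num⟩ := Subtype.ext pt1_1
      rw [FHomeo_pt1, e, hf]
      norm_num
    · refine ⟨pt2, 0, by rw [pt2_0]; norm_num, ?_⟩
      have e : (⟨pt2.1 0, ⟨pt2.2.1 0, by rw [pt2_0]; norm_num⟩⟩ : Set.Icc (0:ℝ) (1/3))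
          = ⟨1/4, by norm_num⟩ := Subtype.ext pt2_0
      rw [FHomeo_pt2, e]
      exact fun h => hf h.symm
  refine ⟨FHomeo, hcomf, ?_, ?_, hb4, ?_⟩
  · intro h
    have h1 : (FHomeo pt1).1 1 = pt1.1 1 := by rw [h]; rfl
    rw [FHomeo_pt1, pt1_1] at h1
    norm_num at h1
  · intro μ _ _
    ext y
    simp only [Set.mem_image, layer, Set.mem_setOf_eq]
    constructor
    · rintro ⟨x, hx, rfl⟩
      rw [minCoord_eq] at hx ⊢
      rw [FHomeo_apply, mn_Fmap]
      exact hx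
    · intro hy
      obtain ⟨x, hx⟩ := Fmap_surj y
      refine ⟨x, ?_, by rw [FHomeo_apply, hx]⟩
      rw [minCoord_eq]
      rw [minCoord_eq] at hy
      rw [← hx, mn_Fmap] at hy
      exact hy
  · intro Λ _ hprop hsurj
    obtain ⟨f, hf⟩ := hsurj FHomeo hcomf
    obtain ⟨x, i, hx, hne⟩ := hb4 f
    apply hne
    have := hprop f x i hx
    rw [hf] at this
    exact this

end
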